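/- Let q be a prime power, let k, n, d, l be positive integers with d ≤ k and k + l ≤ n − k, and let C ⊆ F_q^{k×(n−k−l)} be an MRD code with minimum rank distance d. Then the set { row space of [0_{k×l} | I_k | M] : M ∈ C } ⊆ G_q(k,n) is a constant dimension code with minimum injection distance d and cardinality q^{(n−k−l)(k−d+1)}. -/
import Mathlib


open Matrix Module

/-- The row space of a matrix, i.e. the span of its rows. -/
noncomputable def rowSpace (F : Type) [Field F] {k n : ℕ}
    (M : Matrix (Fin k) (Fin n) F) : Submodule F (Fin n → F) :=
  Submodule.span F (Set.range M)

/-- The block matrix `[0_{k×l} | I_k | M]` of size `k × n`,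
where `M` has size `k × (n - k - l)`. -/
def paddedLift (F : Type) [Field F] (k n l : ℕ)
    (M : Matrix (Fin k) (Fin (n - k - l)) F) : Matrix (Fin k) (Fin n) F :=
  fun i j =>
    if (j : ℕ) < l then 0
    else if h : (j : ℕ) < l + k then (if (j : ℕ) = l + (i : ℕ) then 1 else 0)
    else M i ⟨(j : ℕ) - (l + k), by have := j.isLt; omega⟩

/-- A rank-metric code `C` has minimum rank distance `d`. -/
def HasMinRankDist (F : Type) [Field F] {m n : ℕ}
    (C : Set (Matrix (Fin m) (Fin n) F)) (d : ℕ) : Prop :=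
  (∀ A ∈ C, ∀ B ∈ C, A ≠ B → d ≤ (A - B).rank) ∧
  ∃ A ∈ C, ∃ B ∈ C, A ≠ B ∧ (A - B).rank = d

/-- A rank-metric code is MRD if it has minimum rank distance `d` and attains
the Singleton-like bound. -/
def IsMRD (F : Type) [Field F] [Fintype F] {m n : ℕ}
    (C : Set (Matrix (Fin m) (Fin n) F)) (d : ℕ) : Prop :=
  HasMinRankDist F C d ∧
  Nat.card C = (Fintype.card F) ^ (max n m * (min n m - d + 1))

/-- A constant dimension code `𝒞` of dimension `k` has minimum injection distance `d`. -/
def HasMinInjDist (F : Type) [Field F] {n : ℕ} (k : ℕ)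
    (𝒞 : Set (Submodule F (Fin n → F))) (d : ℕ) : Prop :=
  (∀ U ∈ 𝒞, ∀ V ∈ 𝒞, U ≠ V → d ≤ k - finrank F ↥(U ⊓ V)) ∧
  ∃ U ∈ 𝒞, ∃ V ∈ 𝒞, U ≠ V ∧ k - finrank F ↥(U ⊓ V) = d

section Aux

variable {F : Type} [Field F]

lemma vecMul_paddedLift {k n l : ℕ} (hlk : l + k ≤ n)
    (M : Matrix (Fin k) (Fin (n - k - l)) F) (c : Fin k → F) (j : Fin n) :
    Matrix.vecMul c (paddedLift F k n l M) j =
      if h1 : (j : ℕ) < l then 0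
      else if h2 : (j : ℕ) < l + k then c ⟨(j : ℕ) - l, by omega⟩
      else Matrix.vecMul c M ⟨(j : ℕ) - (l + k), by have := j.isLt; omega⟩ := by
  by_cases h1 : (j : ℕ) < l
  · rw [dif_pos h1]
    simp [Matrix.vecMul, dotProduct, paddedLift, h1]
  · by_cases h2 : (j : ℕ) < l + k
    · rw [dif_neg h1, dif_pos h2]
      have e : Matrix.vecMul c (paddedLift F k n l M) j
          = ∑ i, c i * (if (j : ℕ) = l + (i : ℕ) then 1 else 0) := by
        simp [Matrix.vecMul, dotProduct, paddedLift, h1, h2]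
      rw [e, Finset.sum_eq_single (⟨(j : ℕ) - l, by omega⟩ : Fin k)]
      · rw [if_pos (by simp only [Fin.val_mk]; omega), mul_one]
      · intro b _ hb
        rw [if_neg, mul_zero]
        intro hjb
        exact hb (Fin.ext (by simp only [Fin.val_mk]; omega))
      · intro h; exact absurd (Finset.mem_univ _) h
    · rw [dif_neg h1, dif_neg h2]
      simp [Matrix.vecMul, dotProduct, paddedLift, h1, h2]

lemma paddedLift_vecMul_inj {k n l : ℕ} (hlk : l + k ≤ n)
    (M : Matrix (Fin k) (Fin (n - k - l)) F) :
    Function.Injective (paddedLift F k n l M).vecMulLinear := by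
  intro c c' h
  funext i
  have hi : l + (i : ℕ) < n := by have := i.isLt; omega
  have hj := congrFun h (⟨l + (i : ℕ), hi⟩ : Fin n)
  rw [Matrix.vecMulLinear_apply, Matrix.vecMulLinear_apply,
    vecMul_paddedLift hlk, vecMul_paddedLift hlk] at hj
  have hnl : ¬ ((⟨l + (i : ℕ), hi⟩ : Fin n) : ℕ) < l := by
    simp only [Fin.val_mk]; omega
  have hlt : ((⟨l + (i : ℕ), hi⟩ : Fin n) : ℕ) < l + k := by
    simp only [Fin.val_mk]; have := i.isLt; omega
  rw [dif_neg hnl, dif_pos hlt, dif_neg hnl, dif_pos hlt] at hj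
  have hfin : (⟨((⟨l + (i : ℕ), hi⟩ : Fin n) : ℕ) - l, by
      simp only [Fin.val_mk]; have := i.isLt; omega⟩ : Fin k) = i :=
    Fin.ext (by simp only [Fin.val_mk]; omega)
  rwa [hfin] at hj

lemma finrank_range_vecMulLinear {k m : ℕ} (P : Matrix (Fin k) (Fin m) F) :
    finrank F (LinearMap.range P.vecMulLinear) = P.rank := by
  rw [← Matrix.mulVecLin_transpose]
  exact Matrix.rank_transpose P

lemma rowSpace_paddedLift_eq {k n l : ℕ}
    (M : Matrix (Fin k) (Fin (n - k - l)) F) :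
    rowSpace F (paddedLift F k n l M) =
      LinearMap.range (paddedLift F k n l M).vecMulLinear :=
  (range_vecMulLinear _).symm

lemma finrank_rowSpace_paddedLift {k n l : ℕ} (hlk : l + k ≤ n)
    (M : Matrix (Fin k) (Fin (n - k - l)) F) :
    finrank F (rowSpace F (paddedLift F k n l M)) = k := by
  rw [rowSpace_paddedLift_eq,
    LinearMap.finrank_range_of_inj (paddedLift_vecMul_inj hlk M)]
  exact Module.finrank_fin_fun F

lemma inter_rowSpace_paddedLift {k n l : ℕ} (hlk : l + k ≤ n)
    (M N : Matrix (Fin k) (Fin (n - k - l)) F) :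
    rowSpace F (paddedLift F k n l M) ⊓ rowSpace F (paddedLift F k n l N) =
      Submodule.map (paddedLift F k n l M).vecMulLinear
        (LinearMap.ker (M - N).vecMulLinear) := by
  rw [rowSpace_paddedLift_eq, rowSpace_paddedLift_eq]
  ext v
  constructor
  · rintro ⟨⟨c, hc⟩, ⟨c', hc'⟩⟩
    refine ⟨c, ?_, hc⟩
    simp only [SetLike.mem_coe]
    have hcc : c = c' := by
      funext i
      have hi : l + (i : ℕ) < n := by have := i.isLt; omega
      have h1 := congrFun hc (⟨l + (i : ℕ), hi⟩ : Fin n)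
      have h2 := congrFun hc' (⟨l + (i : ℕ), hi⟩ : Fin n)
      rw [Matrix.vecMulLinear_apply, vecMul_paddedLift hlk] at h1 h2
      have hnl : ¬ ((⟨l + (i : ℕ), hi⟩ : Fin n) : ℕ) < l := by
        simp only [Fin.val_mk]; omega
      have hlt : ((⟨l + (i : ℕ), hi⟩ : Fin n) : ℕ) < l + k := by
        simp only [Fin.val_mk]; have := i.isLt; omega
      rw [dif_neg hnl, dif_pos hlt] at h1 h2
      have hfin : (⟨((⟨l + (i : ℕ), hi⟩ : Fin n) : ℕ) - l, by
          simp only [Fin.val_mk]; have := i.isLt; omega⟩ : Fin k) = i :=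
        Fin.ext (by simp only [Fin.val_mk]; omega)
      rw [hfin] at h1 h2
      rw [h1, h2]
    subst hcc
    rw [LinearMap.mem_ker]
    funext t
    have ht : l + k + (t : ℕ) < n := by have := t.isLt; omega
    have h1 := congrFun hc (⟨l + k + (t : ℕ), ht⟩ : Fin n)
    have h2 := congrFun hc' (⟨l + k + (t : ℕ), ht⟩ : Fin n)
    rw [Matrix.vecMulLinear_apply, vecMul_paddedLift hlk] at h1 h2
    have hnl : ¬ ((⟨l + k + (t : ℕ), ht⟩ : Fin n) : ℕ) < l := by
      simp only [Fin.val_mk]; omega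
    have hnlt : ¬ ((⟨l + k + (t : ℕ), ht⟩ : Fin n) : ℕ) < l + k := by
      simp only [Fin.val_mk]; omega
    rw [dif_neg hnl, dif_neg hnlt] at h1 h2
    have hfin : (⟨((⟨l + k + (t : ℕ), ht⟩ : Fin n) : ℕ) - (l + k), by
        simp only [Fin.val_mk]; have := t.isLt; omega⟩ : Fin (n - k - l)) = t :=
      Fin.ext (by simp only [Fin.val_mk]; omega)
    rw [hfin] at h1 h2
    rw [Matrix.vecMulLinear_apply, Matrix.vecMul_sub, Pi.sub_apply, Pi.zero_apply,
      h1, h2, sub_self]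
  · rintro ⟨c, hcker, rfl⟩
    simp only [SetLike.mem_coe, LinearMap.mem_ker] at hcker
    have hMN : Matrix.vecMul c M = Matrix.vecMul c N := by
      rw [Matrix.vecMulLinear_apply, Matrix.vecMul_sub, sub_eq_zero] at hcker
      exact hcker
    refine ⟨⟨c, rfl⟩, ⟨c, ?_⟩⟩
    rw [Matrix.vecMulLinear_apply, Matrix.vecMulLinear_apply]
    funext j
    rw [vecMul_paddedLift hlk, vecMul_paddedLift hlk]
    by_cases h1 : (j : ℕ) < l
    · simp [h1]
    · by_cases h2 : (j : ℕ) < l + k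
      · simp [h1, h2]
      · rw [dif_neg h1, dif_neg h2, dif_neg h1, dif_neg h2, hMN]

lemma finrank_inter_rowSpace {k n l : ℕ} (hlk : l + k ≤ n)
    (M N : Matrix (Fin k) (Fin (n - k - l)) F) :
    k - finrank F ↥(rowSpace F (paddedLift F k n l M) ⊓
        rowSpace F (paddedLift F k n l N)) = (M - N).rank := by
  rw [inter_rowSpace_paddedLift hlk,
    ← LinearEquiv.finrank_eq (Submodule.equivMapOfInjective
      (paddedLift F k n l M).vecMulLinear (paddedLift_vecMul_inj hlk M)
      (LinearMap.ker (M - N).vecMulLinear))]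
  have hrn := LinearMap.finrank_range_add_finrank_ker (M - N).vecMulLinear
  rw [finrank_range_vecMulLinear, Module.finrank_fin_fun] at hrn
  have hle := Matrix.rank_le_height (M - N)
  omega

end Aux

/-- **Padded lifted MRD codes.**
If `C ⊆ F_q^{k×(n−k−l)}` is an MRD code with minimum rank distance `d`
(`d ≤ k`, `k + l ≤ n − k`), then `{rowspace [0_{k×l} | I_k | M] : M ∈ C}` is a
constant dimension code in `G_q(k,n)` with minimum injection distance `d` and
cardinality `q^{(n−k−l)(k−d+1)}`. -/
theorem padded_lifted_MRD_code
    (q : ℕ) (F : Type) [Field F] [Fintype F] (hq : Fintype.card F = q)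
    (k n d l : ℕ) (hk : 0 < k) (hn : 0 < n) (hd : 0 < d) (hl : 0 < l)
    (hdk : d ≤ k) (hkl : k + l ≤ n - k)
    (C : Set (Matrix (Fin k) (Fin (n - k - l)) F)) (hC : IsMRD F C d) :
    (∀ U ∈ (fun M => rowSpace F (paddedLift F k n l M)) '' C, finrank F ↥U = k) ∧
    HasMinInjDist F k ((fun M => rowSpace F (paddedLift F k n l M)) '' C) d ∧
    Nat.card ((fun M => rowSpace F (paddedLift F k n l M)) '' C)
      = q ^ ((n - k - l) * (k - d + 1)) := by
  have hlk : l + k ≤ n := by omega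
  set f : Matrix (Fin k) (Fin (n - k - l)) F → Submodule F (Fin n → F) :=
    fun M => rowSpace F (paddedLift F k n l M) with hf
  have hdim : ∀ U ∈ f '' C, finrank F ↥U = k := by
    rintro U ⟨M, _, rfl⟩
    exact finrank_rowSpace_paddedLift hlk M
  have hkey : ∀ M N : Matrix (Fin k) (Fin (n - k - l)) F,
      k - finrank F ↥(f M ⊓ f N) = (M - N).rank := fun M N =>
    finrank_inter_rowSpace hlk M N
  have hne : ∀ M ∈ C, ∀ N ∈ C, M ≠ N → f M ≠ f N := by
    intro M hM N hN hMN heq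
    have h1 := hC.1.1 M hM N hN hMN
    have h2 := hkey M N
    rw [heq, inf_idem] at h2
    have h3 : finrank F ↥(f N) = k := hdim _ ⟨N, hN, rfl⟩
    omega
  refine ⟨hdim, ⟨?_, ?_⟩, ?_⟩
  · rintro U ⟨M, hM, rfl⟩ V ⟨N, hN, rfl⟩ hUV
    have hMN : M ≠ N := by rintro rfl; exact hUV rfl
    have := hC.1.1 M hM N hN hMN
    rwa [← hkey M N] at this
  · obtain ⟨A, hA, B, hB, hAB, hrank⟩ := hC.1.2
    exact ⟨f A, ⟨A, hA, rfl⟩, f B, ⟨B, hB, rfl⟩, hne A hA B hB hAB,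
      by rw [hkey A B, hrank]⟩
  · have hinj : Set.InjOn f C := by
      intro M hM N hN h
      by_contra hMN
      exact hne M hM N hN hMN h
    rw [Nat.card_image_of_injOn hinj, hC.2, hq]
    congr 1
    have h1 : k ≤ n - k - l := by omega
    rw [max_eq_left h1, min_eq_right h1]
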